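/- Let H be a connected hypergraph on n vertices that contains a Berge cycle of length k. If n > k, then H contains a Berge path of length k. -/

import Mathlib

/-- A Berge path of length `k` in a hypergraph `H`: `k+1` distinct vertices
`v 0, …, v k` and `k` distinct hyperedges `h 0, …, h (k-1)` of `H` with
`{v i, v (i+1)} ⊆ h i` for all `i`. -/
def HasBergePath {V : Type*} (H : Finset (Finset V)) (k : ℕ) : Prop :=
  ∃ (v : Fin (k + 1) → V) (h : Fin k → Finset V),
    Function.Injective v ∧ Function.Injective h ∧
    ∀ i : Fin k, h i ∈ H ∧ v i.castSucc ∈ h i ∧ v i.succ ∈ h i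

/-- A hypergraph is linear if any two distinct hyperedges share at most one vertex. -/
def IsLinear {V : Type*} [DecidableEq V] (H : Finset (Finset V)) : Prop :=
  ∀ e₁ ∈ H, ∀ e₂ ∈ H, e₁ ≠ e₂ → (e₁ ∩ e₂).card ≤ 1

/-- The number of edges of the two-shadow `∂H` of a hypergraph `H`, i.e. the number
of `2`-element vertex sets contained in some hyperedge of `H`. -/
def shadowEdgeCount {V : Type*} [DecidableEq V] (H : Finset (Finset V)) : ℕ :=
  (H.biUnion fun e => e.powersetCard 2).card
/-- A Berge cycle of length `ℓ ≥ 2` in a hypergraph `H`: `ℓ` distinct vertices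
`v 0, …, v (ℓ-1)` and `ℓ` distinct hyperedges `h 0, …, h (ℓ-1)` of `H` with
`{v i, v (i+1)} ⊆ h i` for all `i`, indices modulo `ℓ`. -/
def HasBergeCycle {V : Type*} (H : Finset (Finset V)) (ℓ : ℕ) : Prop :=
  ∃ (hℓ : 2 ≤ ℓ) (v : Fin ℓ → V) (h : Fin ℓ → Finset V),
    Function.Injective v ∧ Function.Injective h ∧
    ∀ i : Fin ℓ, h i ∈ H ∧ v i ∈ h i ∧
      v ⟨(i.val + 1) % ℓ, Nat.mod_lt _ (by omega)⟩ ∈ h i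

/-- The two-shadow of a hypergraph `H`, as a simple graph: `a` and `b` are adjacent
iff they are distinct and lie in a common hyperedge of `H`. -/
def shadowGraph {V : Type*} (H : Finset (Finset V)) : SimpleGraph V where
  Adj a b := a ≠ b ∧ ∃ e ∈ H, a ∈ e ∧ b ∈ e
  symm := ⟨fun a b hab => ⟨hab.1.symm, hab.2.imp fun e he => ⟨he.1, he.2.2, he.2.1⟩⟩⟩
  loopless := ⟨fun a ha => ha.1 rfl⟩


lemma mod_two_mul_eq {k a : ℕ} (ha : a < 2 * k) :
    a % k = if a < k then a else a - k := by
  split_ifs with hlt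
  · exact Nat.mod_eq_of_lt hlt
  · rw [Nat.mod_eq_sub_mod (le_of_not_gt hlt), Nat.mod_eq_of_lt (by omega)]

lemma walk_cross {V : Type*} {G : SimpleGraph V} {S : Set V} :
    ∀ {a b : V}, G.Walk a b → a ∈ S → b ∉ S →
      ∃ x y, x ∈ S ∧ y ∉ S ∧ G.Adj x y := by
  intro a b p
  induction p with
  | nil => intro ha hb; exact absurd ha hb
  | @cons a c b adj p ih =>
    intro ha hb
    by_cases hc : c ∈ S
    · exact ih hc hb
    · exact ⟨a, c, ha, hc, adj⟩

lemma construct_berge_path {V : Type*} [DecidableEq V] (H : Finset (Finset V)) (k : ℕ)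
    (hk : 2 ≤ k)
    (v : Fin k → V) (h : Fin k → Finset V)
    (hv : Function.Injective v) (hh : Function.Injective h)
    (hprop : ∀ i : Fin k, h i ∈ H ∧ v i ∈ h i ∧
      v ⟨(i.val + 1) % k, Nat.mod_lt _ (by omega)⟩ ∈ h i)
    (u : V) (hu : ∀ i, u ≠ v i)
    (j : Fin k) (e : Finset V) (he : e ∈ H) (hue : u ∈ e) (hve : v j ∈ e)
    (hne : ∀ t : Fin k, t.val ≠ 0 →
      e ≠ h ⟨(j.val + t.val - 1) % k, Nat.mod_lt _ (by omega)⟩) :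
    HasBergePath H k := by
  have hk0 : 0 < k := by omega
  refine ⟨fun t => if t.val = 0 then u else v ⟨(j.val + t.val - 1) % k, Nat.mod_lt _ hk0⟩,
          fun t => if t.val = 0 then e else h ⟨(j.val + t.val - 1) % k, Nat.mod_lt _ hk0⟩,
          ?_, ?_, ?_⟩
  · intro a b hab
    simp only at hab
    split_ifs at hab with h1 h2 h2
    · exact Fin.ext (by omega)
    · exact absurd hab (hu _)
    · exact absurd hab.symm (hu _)
    · have := congrArg Fin.val (hv hab)
      simp only at this
      rw [mod_two_mul_eq (by omega), mod_two_mul_eq (by omega)] at this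
      split_ifs at this <;> exact Fin.ext (by omega)
  · intro a b hab
    simp only at hab
    split_ifs at hab with h1 h2 h2
    · exact Fin.ext (by omega)
    · exact absurd hab (hne b h2)
    · exact absurd hab.symm (hne a h1)
    · have := congrArg Fin.val (hh hab)
      simp only at this
      rw [mod_two_mul_eq (by omega), mod_two_mul_eq (by omega)] at this
      split_ifs at this <;> exact Fin.ext (by omega)
  · intro t
    by_cases ht : t.val = 0
    · have hc : t.castSucc.val = 0 := ht
      have hs : t.succ.val = 1 := by simp [Fin.val_succ, ht]
      refine ⟨?_, ?_, ?_⟩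
      · simp only [ht, if_pos rfl]; exact he
      · simp only [ht, hc, if_pos rfl]; exact hue
      · simp only [ht, hs, if_pos rfl, if_neg one_ne_zero]
        have : (⟨(j.val + 1 - 1) % k, Nat.mod_lt _ hk0⟩ : Fin k) = j :=
          Fin.ext (by simp [Nat.mod_eq_of_lt j.isLt])
        rw [this]; exact hve
    · have hc : t.castSucc.val = t.val := rfl
      have hs : t.succ.val = t.val + 1 := rfl
      have hs0 : t.succ.val ≠ 0 := by omega
      refine ⟨?_, ?_, ?_⟩
      · simp only [if_neg ht]; exact (hprop _).1
      · simp only [if_neg ht, hc]; exact (hprop _).2.1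
      · simp only [if_neg ht, hs, if_neg hs0]
        have key := (hprop ⟨(j.val + t.val - 1) % k, Nat.mod_lt _ hk0⟩).2.2
        have harith : (⟨((j.val + t.val - 1) % k + 1) % k, Nat.mod_lt _ hk0⟩ : Fin k)
            = ⟨(j.val + (t.val + 1) - 1) % k, Nat.mod_lt _ hk0⟩ := by
          apply Fin.ext
          simp only
          rw [Nat.mod_add_mod]
          congr 1
          omega
        rw [harith] at key
        exact key

/-- In a connected hypergraph on `n` vertices containing a Berge cycle of length `k`
with `n > k`, there is a Berge path of length `k`. -/
theorem berge_path_of_berge_cycle {V : Type*} [Fintype V] [DecidableEq V]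
    (H : Finset (Finset V)) (k : ℕ)
    (hconn : (shadowGraph H).Connected)
    (hcyc : HasBergeCycle H k)
    (hn : k < Fintype.card V) :
    HasBergePath H k := by
  obtain ⟨hk, v, h, hv, hh, hprop⟩ := hcyc
  have hk0 : 0 < k := by omega
  have hcard : (Finset.univ.image v).card = k := by
    rw [Finset.card_image_of_injective _ hv, Finset.card_univ, Fintype.card_fin]
  have hex : ∃ u, u ∉ Finset.univ.image v := by
    by_contra hco
    push_neg at hco
    have hsub : (Finset.univ : Finset V) ⊆ Finset.univ.image v := fun x _ => hco x
    have := Finset.card_le_card hsub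
    rw [Finset.card_univ, hcard] at this
    omega
  obtain ⟨u, hu⟩ := hex
  have hrch := hconn.preconnected (v ⟨0, hk0⟩) u
  obtain ⟨p⟩ := hrch
  have hS0 : v ⟨0, hk0⟩ ∈ {z | ∃ i, z = v i} := ⟨⟨0, hk0⟩, rfl⟩
  have hSu : u ∉ {z | ∃ i, z = v i} := by
    rintro ⟨i, hi⟩
    exact hu (Finset.mem_image.mpr ⟨i, Finset.mem_univ i, hi.symm⟩)
  obtain ⟨x, y, hxS, hyS, hadj⟩ := walk_cross p hS0 hSu
  obtain ⟨j, rfl⟩ := hxS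
  obtain ⟨-, e, heH, hxe, hye⟩ := hadj
  have hy' : ∀ i, y ≠ v i := fun i hi => hyS ⟨i, hi⟩
  by_cases hcase : ∃ m : Fin k, e = h m
  · obtain ⟨i, rfl⟩ := hcase
    refine construct_berge_path H k hk v h hv hh hprop y hy'
      ⟨(i.val + 1) % k, Nat.mod_lt _ hk0⟩ (h i) (hprop i).1 hye (hprop i).2.2 ?_
    intro t ht heq
    have := congrArg Fin.val (hh heq)
    simp only at this
    have h1 : (i.val + 1) % k + t.val - 1 = (i.val + 1) % k + (t.val - 1) := by omega
    rw [h1, Nat.mod_add_mod] at this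
    rw [mod_two_mul_eq (by omega)] at this
    split_ifs at this <;> omega
  · push_neg at hcase
    exact construct_berge_path H k hk v h hv hh hprop y hy' j e heH hye hxe
      (fun t ht heq => hcase _ heq)
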